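/- The square of the generalized theta graph Θ(2,4,4) is equitably 5-choosable. -/
import Mathlib


open SimpleGraph

attribute [local instance] Classical.propDecidable

/-- `f` is an equitable `L`-coloring of `G` for the `k`-assignment `L`: a proper coloring
from the lists in which each color is used at most `⌈|V(G)|/k⌉` times. -/
def IsEquitableLColoring {V α : Type} [Fintype V] (G : SimpleGraph V) (k : ℕ)
    (L : V → Finset α) (f : V → α) : Prop :=
  (∀ v, f v ∈ L v) ∧ (∀ u v, G.Adj u v → f u ≠ f v) ∧
    ∀ c : α, (Finset.univ.filter fun v => f v = c).card ≤ (Fintype.card V + k - 1) / k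

/-- `G` is equitably `k`-choosable: equitably `L`-colorable for every `k`-assignment `L`. -/
def EquitablyChoosable {V : Type} [Fintype V] (G : SimpleGraph V) (k : ℕ) : Prop :=
  ∀ (α : Type) (L : V → Finset α), (∀ v, (L v).card = k) →
    ∃ f : V → α, IsEquitableLColoring G k L f

/-- The generalized theta graph `Θ(l₁, …, l_m)`: two vertices `Sum.inl false` (= u) and
`Sum.inl true` (= w) joined by `m` internally disjoint paths, the `i`-th of length `l i`
with internal vertices `Sum.inr ⟨i, j⟩` for `j : Fin (l i - 1)`. -/
def theta (m : ℕ) (l : Fin m → ℕ) : SimpleGraph (Bool ⊕ Σ i : Fin m, Fin (l i - 1)) :=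
  SimpleGraph.fromRel (fun x y => match x, y with
    | Sum.inl a, Sum.inl b => a ≠ b ∧ ∃ i, l i = 1
    | Sum.inl false, Sum.inr ⟨_, j⟩ => (j : ℕ) = 0
    | Sum.inl true, Sum.inr ⟨i, j⟩ => (j : ℕ) + 2 = l i
    | Sum.inr ⟨i, j⟩, Sum.inr ⟨i', j'⟩ => (i : ℕ) = (i' : ℕ) ∧ (j : ℕ) + 1 = (j' : ℕ)
    | _, _ => False)

/-- The `p`-th power of `G`: same vertices, edges between distinct vertices at distance
at most `p` in `G`. -/
def graphPow {V : Type} (G : SimpleGraph V) (p : ℕ) : SimpleGraph V :=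
  SimpleGraph.fromRel (fun u v => G.Reachable u v ∧ G.dist u v ≤ p)

abbrev V9 : Type := Bool ⊕ Σ i : Fin 3, Fin (![2, 4, 4] i - 1)

def vu : V9 := Sum.inl false
def vw : V9 := Sum.inl true
def va : V9 := Sum.inr ⟨⟨0, by omega⟩, ⟨0, by show 0 < 1; omega⟩⟩
def vb1 : V9 := Sum.inr ⟨⟨1, by omega⟩, ⟨0, by show 0 < 3; omega⟩⟩
def vb2 : V9 := Sum.inr ⟨⟨1, by omega⟩, ⟨1, by show 1 < 3; omega⟩⟩
def vb3 : V9 := Sum.inr ⟨⟨1, by omega⟩, ⟨2, by show 2 < 3; omega⟩⟩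
def vc1 : V9 := Sum.inr ⟨⟨2, by omega⟩, ⟨0, by show 0 < 3; omega⟩⟩
def vc2 : V9 := Sum.inr ⟨⟨2, by omega⟩, ⟨1, by show 1 < 3; omega⟩⟩
def vc3 : V9 := Sum.inr ⟨⟨2, by omega⟩, ⟨2, by show 2 < 3; omega⟩⟩

def vbeq : V9 → V9 → Bool
  | Sum.inl x, Sum.inl y => x == y
  | Sum.inr ⟨i, j⟩, Sum.inr ⟨i', j'⟩ => i.val == i'.val && j.val == j'.val
  | _, _ => false

lemma vbeq_eq : ∀ x y : V9, vbeq x y = true → x = y := by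
  rintro (x | ⟨i, j⟩) (y | ⟨i', j'⟩) h <;> simp [vbeq] at h
  · exact congrArg Sum.inl h
  · obtain ⟨h1, h2⟩ := h
    have hi : i = i' := Fin.ext h1
    subst hi
    have hj : j = j' := Fin.ext h2
    subst hj
    rfl

def pathLen : ℕ → ℕ
  | 0 => 2
  | _ => 4

lemma matv : ∀ i : Fin 3, ![2, 4, 4] i = pathLen i.val := by
  rintro ⟨iv, hi⟩
  interval_cases iv <;> rfl

def taB : V9 → V9 → Bool
  | Sum.inl _, Sum.inl _ => false
  | Sum.inl false, Sum.inr ⟨_, j⟩ => j.val == 0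
  | Sum.inr ⟨_, j⟩, Sum.inl false => j.val == 0
  | Sum.inl true, Sum.inr ⟨i, j⟩ => j.val + 2 == pathLen i.val
  | Sum.inr ⟨i, j⟩, Sum.inl true => j.val + 2 == pathLen i.val
  | Sum.inr ⟨i, j⟩, Sum.inr ⟨i', j'⟩ =>
      i.val == i'.val && (j.val + 1 == j'.val || j'.val + 1 == j.val)

lemma m1 : ∀ i : Fin 3, ![2, 4, 4] i ≠ 1 := by
  intro i
  rw [matv]
  rcases i with ⟨iv, hi⟩
  interval_cases iv <;> simp [pathLen]

lemma pl_ne_one : ∀ n : ℕ, pathLen n ≠ 1 := by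
  intro n
  cases n <;> simp [pathLen]

lemma theta_adj_char : ∀ x y : V9, (theta 3 ![2, 4, 4]).Adj x y ↔ taB x y = true := by
  rintro ((_ | _) | ⟨i, j⟩) ((_ | _) | ⟨i', j'⟩) <;>
    simp [theta, SimpleGraph.fromRel_adj, taB, m1, matv, pl_ne_one]
  constructor
  · rintro ⟨hne, ⟨h1, h2⟩ | ⟨h1, h2⟩⟩
    · exact ⟨h1, Or.inl h2⟩
    · exact ⟨h1.symm, Or.inr h2⟩
  · rintro ⟨h1, h2⟩
    refine ⟨?_, ?_⟩
    · rintro rfl hheq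
      have : j = j' := eq_of_heq hheq
      subst this
      omega
    · rcases h2 with h2 | h2
      · exact Or.inl ⟨h1, h2⟩
      · exact Or.inr ⟨h1.symm, h2⟩

def allV : List V9 := [vu, vw, va, vb1, vb2, vb3, vc1, vc2, vc3]

lemma vcases : ∀ v : V9, v = vu ∨ v = vw ∨ v = va ∨ v = vb1 ∨ v = vb2 ∨ v = vb3 ∨
    v = vc1 ∨ v = vc2 ∨ v = vc3 := by
  rintro ((_ | _) | ⟨⟨iv, hi⟩, ⟨jv, hj⟩⟩)
  · exact Or.inl rfl
  · exact Or.inr (Or.inl rfl)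
  · interval_cases iv
    · have hj' : jv < 1 := hj
      interval_cases jv
      · exact Or.inr (Or.inr (Or.inl rfl))
    · have hj' : jv < 3 := hj
      interval_cases jv
      · exact Or.inr (Or.inr (Or.inr (Or.inl rfl)))
      · exact Or.inr (Or.inr (Or.inr (Or.inr (Or.inl rfl))))
      · exact Or.inr (Or.inr (Or.inr (Or.inr (Or.inr (Or.inl rfl)))))
    · have hj' : jv < 3 := hj
      interval_cases jv
      · exact Or.inr (Or.inr (Or.inr (Or.inr (Or.inr (Or.inr (Or.inl rfl))))))
      · exact Or.inr (Or.inr (Or.inr (Or.inr (Or.inr (Or.inr (Or.inr (Or.inl rfl)))))))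
      · exact Or.inr (Or.inr (Or.inr (Or.inr (Or.inr (Or.inr (Or.inr (Or.inr rfl)))))))

lemma mem_allV : ∀ v : V9, v ∈ allV := by
  intro v
  rcases vcases v with rfl | rfl | rfl | rfl | rfl | rfl | rfl | rfl | rfl <;>
    simp [allV]

lemma pow2_adj {V : Type} (G : SimpleGraph V) (x y : V) :
    (graphPow G 2).Adj x y ↔ x ≠ y ∧ (G.Adj x y ∨ ∃ z, G.Adj x z ∧ G.Adj z y) := by
  constructor
  · rintro ⟨hne, h⟩
    refine ⟨hne, ?_⟩
    have hr : G.Reachable x y ∧ G.dist x y ≤ 2 := by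
      rcases h with ⟨h1, h2⟩ | ⟨h1, h2⟩
      · exact ⟨h1, h2⟩
      · exact ⟨h1.symm, by rwa [SimpleGraph.dist_comm]⟩
    obtain ⟨p, hp⟩ := hr.1.exists_walk_length_eq_dist
    have hlen : p.length ≤ 2 := by rw [hp]; exact hr.2
    cases p with
    | nil => exact absurd rfl hne
    | cons hadj q =>
      cases q with
      | nil => exact Or.inl hadj
      | cons hadj2 q2 =>
        cases q2 with
        | nil => exact Or.inr ⟨_, hadj, hadj2⟩
        | cons hadj3 q3 => simp [SimpleGraph.Walk.length_cons] at hlen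
  · rintro ⟨hne, h | ⟨z, h1, h2⟩⟩
    · refine ⟨hne, Or.inl ⟨h.reachable, ?_⟩⟩
      have := SimpleGraph.dist_le (SimpleGraph.Walk.cons h SimpleGraph.Walk.nil)
      simpa using Nat.le_trans this (by norm_num)
    · refine ⟨hne, Or.inl ⟨?_, ?_⟩⟩
      · exact SimpleGraph.Walk.reachable (SimpleGraph.Walk.cons h1 (SimpleGraph.Walk.cons h2 SimpleGraph.Walk.nil))
      · have := SimpleGraph.dist_le (SimpleGraph.Walk.cons h1 (SimpleGraph.Walk.cons h2 SimpleGraph.Walk.nil))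
        simpa using this

def adj2B (x y : V9) : Bool :=
  !(vbeq x y) && (taB x y || allV.any fun z => taB x z && taB z y)

lemma pow_adj_char : ∀ x y : V9, (graphPow (theta 3 ![2, 4, 4]) 2).Adj x y ↔ adj2B x y = true := by
  intro x y
  rw [pow2_adj]
  unfold adj2B
  rw [Bool.and_eq_true, Bool.or_eq_true, Bool.not_eq_true', List.any_eq_true]
  constructor
  · rintro ⟨hne, h⟩
    refine ⟨?_, ?_⟩
    · cases hv : vbeq x y
      · rfl
      · exact absurd (vbeq_eq _ _ hv) hne
    · rcases h with h | ⟨z, h1, h2⟩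
      · exact Or.inl ((theta_adj_char x y).mp h)
      · exact Or.inr ⟨z, mem_allV z, by
          rw [Bool.and_eq_true]
          exact ⟨(theta_adj_char x z).mp h1, (theta_adj_char z y).mp h2⟩⟩
  · rintro ⟨hne, h⟩
    refine ⟨?_, ?_⟩
    · intro hxy
      subst hxy
      rw [show vbeq x x = true from by
        rcases vcases x with rfl|rfl|rfl|rfl|rfl|rfl|rfl|rfl|rfl <;> rfl] at hne
      exact Bool.noConfusion hne
    · rcases h with h | ⟨z, _, hz⟩
      · exact Or.inl ((theta_adj_char x y).mpr h)
      · rw [Bool.and_eq_true] at hz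
        exact Or.inr ⟨z, (theta_adj_char x z).mpr hz.1, (theta_adj_char z y).mpr hz.2⟩

lemma card_V9 : Fintype.card V9 = 9 := rfl

def inS (p : V9) : Bool := vbeq p va || vbeq p vb2 || vbeq p vc2

lemma inS_eq (p : V9) (h : inS p = true) : p = va ∨ p = vb2 ∨ p = vc2 := by
  rw [inS, Bool.or_eq_true, Bool.or_eq_true] at h
  rcases h with (h | h) | h
  · exact Or.inl (vbeq_eq _ _ h)
  · exact Or.inr (Or.inl (vbeq_eq _ _ h))
  · exact Or.inr (Or.inr (vbeq_eq _ _ h))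

lemma vbeq_false {p q : V9} (h : p ≠ q) : vbeq p q = false := by
  cases hv : vbeq p q
  · rfl
  · exact absurd (vbeq_eq _ _ hv) h

lemma triple_mem (p q r : V9) (hpq : p ≠ q) (hpr : p ≠ r) (hqr : q ≠ r)
    (h1 : adj2B p q = false) (h2 : adj2B p r = false) (h3 : adj2B q r = false) :
    (p = va ∨ p = vb2 ∨ p = vc2) ∧ (q = va ∨ q = vb2 ∨ q = vc2) ∧
      (r = va ∨ r = vb2 ∨ r = vc2) := by
  have hc0 : (allV.all fun p => allV.all fun q => allV.all fun r =>
      vbeq p q || vbeq p r || vbeq q r || adj2B p q || adj2B p r || adj2B q r ||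
      (inS p && inS q && inS r)) = true := rfl
  rw [List.all_eq_true] at hc0
  have hc1 := hc0 p (mem_allV p)
  rw [List.all_eq_true] at hc1
  have hc2 := hc1 q (mem_allV q)
  rw [List.all_eq_true] at hc2
  have hc3 := hc2 r (mem_allV r)
  rw [vbeq_false hpq, vbeq_false hpr, vbeq_false hqr, h1, h2, h3] at hc3
  simp only [Bool.false_or] at hc3
  rw [Bool.and_eq_true, Bool.and_eq_true] at hc3
  exact ⟨inS_eq p hc3.1.1, inS_eq q hc3.1.2, inS_eq r hc3.2⟩

def fcol {A : Type} (c d g b a x y z t : A) : V9 → A := fun v =>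
  match v with
  | Sum.inl false => y
  | Sum.inl true => x
  | Sum.inr ⟨i, j⟩ =>
    match i.val, j.val with
    | 0, _ => a
    | 1, 0 => b
    | 1, 1 => t
    | 1, 2 => g
    | 2, 0 => d
    | 2, 1 => z
    | _, _ => c

section fcoleval
variable {A : Type} (c d g b a x y z t : A)

lemma fcol_vu : fcol c d g b a x y z t vu = y := rfl
lemma fcol_vw : fcol c d g b a x y z t vw = x := rfl
lemma fcol_va : fcol c d g b a x y z t va = a := rfl
lemma fcol_vb1 : fcol c d g b a x y z t vb1 = b := rfl
lemma fcol_vb2 : fcol c d g b a x y z t vb2 = t := rfl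
lemma fcol_vb3 : fcol c d g b a x y z t vb3 = g := rfl
lemma fcol_vc1 : fcol c d g b a x y z t vc1 = d := rfl
lemma fcol_vc2 : fcol c d g b a x y z t vc2 = z := rfl
lemma fcol_vc3 : fcol c d g b a x y z t vc3 = c := rfl

end fcoleval

lemma card4 {A : Type} (p1 p2 p3 p4 : A) [DecidableEq A] : ({p1,p2,p3,p4} : Finset A).card ≤ 4 := by
  apply le_trans (Finset.card_insert_le _ _)
  have : ({p2,p3,p4} : Finset A).card ≤ 3 := by
    apply le_trans (Finset.card_insert_le _ _)
    have : ({p3,p4} : Finset A).card ≤ 2 := by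
      apply le_trans (Finset.card_insert_le _ _)
      simp
    omega
  omega

lemma card5 {A : Type} (p1 p2 p3 p4 p5 : A) [DecidableEq A] :
    ({p1,p2,p3,p4,p5} : Finset A).card ≤ 5 := by
  apply le_trans (Finset.card_insert_le _ _)
  have := card4 p2 p3 p4 p5 (A := A)
  omega

open Finset in
lemma main_choice {A : Type} [DecidableEq A] (Lc3 Lc1 Lb3 Lb1 La Lw Lu Lc2 Lb2 : Finset A)
    (h1 : Lc3.card = 5) (h2 : Lc1.card = 5) (h3 : Lb3.card = 5) (h4 : Lb1.card = 5)
    (h5 : La.card = 5) (h6 : Lw.card = 5) (h7 : Lu.card = 5) (h8 : Lc2.card = 5)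
    (h9 : Lb2.card = 5)
    (H : ∀ c ∈ Lc3, ∀ d ∈ Lc1, ∀ g ∈ Lb3, ∀ b ∈ Lb1, ∀ a ∈ La, ∀ x ∈ Lw, ∀ y ∈ Lu,
      ∀ z ∈ Lc2, ∀ t ∈ Lb2,
      d ≠ c → g ≠ c → b ≠ d → b ≠ g →
      a ≠ c → a ≠ d → a ≠ g → a ≠ b →
      x ≠ c → x ≠ g → x ≠ a →
      y ≠ d → y ≠ b → y ≠ a → y ≠ x →
      z ≠ c → z ≠ d → z ≠ x → z ≠ y →
      t ≠ g → t ≠ b → t ≠ x → t ≠ y →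
      z = a ∧ t = a) : False := by
  -- choose c and d
  obtain ⟨c, hc⟩ : Lc3.Nonempty := by rw [← Finset.card_pos, h1]; omega
  obtain ⟨d, hd'⟩ : (Lc1 \ {c}).Nonempty := by
    rw [← Finset.card_pos]
    have := Finset.card_le_card_sdiff_add_card (s := Lc1) (t := {c})
    have : ({c} : Finset A).card = 1 := Finset.card_singleton c
    omega
  rw [Finset.mem_sdiff, Finset.mem_singleton] at hd'
  obtain ⟨hd, hdc⟩ := hd'
  -- the key claim
  have key : ∀ g ∈ Lb3, g ≠ c →
      Lw = insert c (insert g (Lc2 \ {c,d})) ∧ g ∉ Lc2 \ ({c,d} : Finset A) := by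
    intro g hg hgc
    obtain ⟨b, hb'⟩ : (Lb1 \ {d,g}).Nonempty := by
      rw [← Finset.card_pos]
      have := Finset.card_le_card_sdiff_add_card (s := Lb1) (t := {d,g})
      have : ({d,g} : Finset A).card ≤ 2 := by
        apply le_trans (Finset.card_insert_le _ _); simp
      omega
    rw [Finset.mem_sdiff, Finset.mem_insert, Finset.mem_singleton] at hb'
    push_neg at hb'
    obtain ⟨hb, hbd, hbg⟩ := hb'
    obtain ⟨a, ha'⟩ : (La \ {c,d,g,b}).Nonempty := by
      rw [← Finset.card_pos]
      have := Finset.card_le_card_sdiff_add_card (s := La) (t := {c,d,g,b})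
      have := card4 c d g b (A := A)
      omega
    rw [Finset.mem_sdiff, Finset.mem_insert, Finset.mem_insert, Finset.mem_insert,
      Finset.mem_singleton] at ha'
    push_neg at ha'
    obtain ⟨ha, hac, had, hag, hab⟩ := ha'
    have hXcard : 2 ≤ (Lw \ ({c,g,a} : Finset A)).card := by
      have := Finset.card_le_card_sdiff_add_card (s := Lw) (t := {c,g,a})
      have : ({c,g,a} : Finset A).card ≤ 3 := by
        apply le_trans (Finset.card_insert_le _ _)
        have : ({g,a} : Finset A).card ≤ 2 := by
          apply le_trans (Finset.card_insert_le _ _); simp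
        omega
      omega
    -- main claim C1
    have C1 : ∀ x ∈ Lw \ ({c,g,a} : Finset A), ∀ y ∈ Lu \ ({d,b,a,x} : Finset A),
        Lc2 = {c,d,a,x,y} := by
      intro x hx y hy
      rw [Finset.mem_sdiff, Finset.mem_insert, Finset.mem_insert, Finset.mem_singleton] at hx
      push_neg at hx
      obtain ⟨hxw, hxc, hxg, hxa⟩ := hx
      rw [Finset.mem_sdiff, Finset.mem_insert, Finset.mem_insert, Finset.mem_insert,
        Finset.mem_singleton] at hy
      push_neg at hy
      obtain ⟨hyu, hyd, hyb, hya, hyx⟩ := hy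
      obtain ⟨t0, ht0'⟩ : (Lb2 \ ({g,b,x,y} : Finset A)).Nonempty := by
        rw [← Finset.card_pos]
        have := Finset.card_le_card_sdiff_add_card (s := Lb2) (t := {g,b,x,y})
        have := card4 g b x y (A := A)
        omega
      rw [Finset.mem_sdiff, Finset.mem_insert, Finset.mem_insert, Finset.mem_insert,
        Finset.mem_singleton] at ht0'
      push_neg at ht0'
      obtain ⟨ht0, ht0g, ht0b, ht0x, ht0y⟩ := ht0'
      have hZa : ∀ z ∈ Lc2 \ ({c,d,x,y} : Finset A), z = a := by
        intro z hz
        rw [Finset.mem_sdiff, Finset.mem_insert, Finset.mem_insert, Finset.mem_insert,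
          Finset.mem_singleton] at hz
        push_neg at hz
        obtain ⟨hz2, hzc, hzd, hzx, hzy⟩ := hz
        exact (H c hc d hd g hg b hb a ha x hxw y hyu z hz2 t0 ht0 hdc hgc hbd hbg
          hac had hag hab hxc hxg hxa hyd hyb hya hyx hzc hzd hzx hzy
          ht0g ht0b ht0x ht0y).1
      have hsub : Lc2 ⊆ {c,d,a,x,y} := by
        intro v hv
        simp only [Finset.mem_insert, Finset.mem_singleton]
        by_cases h : v = c ∨ v = d ∨ v = x ∨ v = y
        · tauto
        · push_neg at h
          have : v = a := hZa v (by
            rw [Finset.mem_sdiff, Finset.mem_insert, Finset.mem_insert, Finset.mem_insert,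
              Finset.mem_singleton]
            push_neg
            exact ⟨hv, h.1, h.2.1, h.2.2.1, h.2.2.2⟩)
          tauto
      exact (Finset.eq_of_subset_of_card_le hsub (by rw [h8]; exact card5 c d a x y)).symm
        |>.symm
    -- some basic elements
    obtain ⟨x0, hx0⟩ : (Lw \ ({c,g,a} : Finset A)).Nonempty := by
      rw [← Finset.card_pos]; omega
    obtain ⟨y0, hy0⟩ : (Lu \ ({d,b,a,x0} : Finset A)).Nonempty := by
      rw [← Finset.card_pos]
      have := Finset.card_le_card_sdiff_add_card (s := Lu) (t := {d,b,a,x0})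
      have := card4 d b a x0 (A := A)
      omega
    have hEq0 := C1 x0 hx0 y0 hy0
    have hcin : c ∈ Lc2 := by rw [hEq0]; simp
    have hdin : d ∈ Lc2 := by rw [hEq0]; simp
    have hain : a ∈ Lc2 := by rw [hEq0]; simp
    have hcda : ({c,d,a} : Finset A).card = 3 := by
      rw [Finset.card_insert_of_notMem (by simp [Ne.symm hdc, Ne.symm hac]),
        Finset.card_insert_of_notMem (by simp [Ne.symm had]), Finset.card_singleton]
    have hcd2 : ({c,d} : Finset A).card = 2 := by
      rw [Finset.card_insert_of_notMem (by simp [Ne.symm hdc]), Finset.card_singleton]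
    have hD'card : (Lc2 \ ({c,d,a} : Finset A)).card = 2 := by
      rw [Finset.card_sdiff_of_subset (by
        intro v hv
        simp only [Finset.mem_insert, Finset.mem_singleton] at hv
        rcases hv with rfl | rfl | rfl <;> assumption), hcda, h8]
    have hDcard : (Lc2 \ ({c,d} : Finset A)).card = 3 := by
      rw [Finset.card_sdiff_of_subset (by
        intro v hv
        simp only [Finset.mem_insert, Finset.mem_singleton] at hv
        rcases hv with rfl | rfl <;> assumption), hcd2, h8]
    -- X ⊆ D'
    have hXsub : Lw \ ({c,g,a} : Finset A) ⊆ Lc2 \ ({c,d,a} : Finset A) := by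
      intro x hx
      obtain ⟨y, hy⟩ : (Lu \ ({d,b,a,x} : Finset A)).Nonempty := by
        rw [← Finset.card_pos]
        have := Finset.card_le_card_sdiff_add_card (s := Lu) (t := {d,b,a,x})
        have := card4 d b a x (A := A)
        omega
      have hEq := C1 x hx y hy
      rw [Finset.mem_sdiff, Finset.mem_insert, Finset.mem_insert, Finset.mem_singleton] at hx
      push_neg at hx
      obtain ⟨hxw, hxc, hxg, hxa⟩ := hx
      have hyy := hy
      rw [Finset.mem_sdiff, Finset.mem_insert, Finset.mem_insert, Finset.mem_insert,
        Finset.mem_singleton] at hyy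
      push_neg at hyy
      have hxd : x ≠ d := by
        intro hxd
        subst hxd
        have hsub2 : Lc2 ⊆ {c,x,a,y} := by
          rw [hEq]
          intro v hv
          simp only [Finset.mem_insert, Finset.mem_singleton] at hv ⊢
          tauto
        have := Finset.card_le_card hsub2
        have := card4 c x a y (A := A)
        omega
      rw [Finset.mem_sdiff, Finset.mem_insert, Finset.mem_insert, Finset.mem_singleton]
      push_neg
      refine ⟨by rw [hEq]; simp, hxc, hxd, hxa⟩
    have hXD' : Lw \ ({c,g,a} : Finset A) = Lc2 \ ({c,d,a} : Finset A) :=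
      Finset.eq_of_subset_of_card_le hXsub (by omega)
    -- Lw = {c,g} ∪ D
    have hLwsub : Lw ⊆ insert c (insert g (Lc2 \ ({c,d} : Finset A))) := by
      intro v hv
      simp only [Finset.mem_insert]
      by_cases h : v = c ∨ v = g
      · tauto
      · push_neg at h
        by_cases h2 : v = a
        · subst h2
          right; right
          rw [Finset.mem_sdiff]
          exact ⟨hain, by simp [hac, had]⟩
        · have : v ∈ Lw \ ({c,g,a} : Finset A) := by
            rw [Finset.mem_sdiff]
            refine ⟨hv, by simp [h.1, h.2, h2]⟩
          rw [hXD'] at this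
          rw [Finset.mem_sdiff] at this
          right; right
          rw [Finset.mem_sdiff]
          refine ⟨this.1, ?_⟩
          intro hm
          apply this.2
          simp only [Finset.mem_insert, Finset.mem_singleton] at hm ⊢
          tauto
    have hLw : Lw = insert c (insert g (Lc2 \ ({c,d} : Finset A))) := by
      apply Finset.eq_of_subset_of_card_le hLwsub
      have := Finset.card_insert_le c (insert g (Lc2 \ ({c,d} : Finset A)))
      have := Finset.card_insert_le g (Lc2 \ ({c,d} : Finset A))
      omega
    have hgD : g ∉ Lc2 \ ({c,d} : Finset A) := by
      intro hgm
      have : g ∈ Lc2 \ ({c,d,a} : Finset A) := by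
        rw [Finset.mem_sdiff] at hgm ⊢
        refine ⟨hgm.1, ?_⟩
        intro hm
        simp only [Finset.mem_insert, Finset.mem_singleton] at hm
        rcases hm with rfl | rfl | rfl
        · exact hgm.2 (by simp)
        · exact hgm.2 (by simp)
        · exact hag rfl
      rw [← hXD'] at this
      rw [Finset.mem_sdiff] at this
      exact this.2 (by simp)
    exact ⟨hLw, hgD⟩
  -- finish
  obtain ⟨g1, hg1, g2, hg2, hgg⟩ : ∃ g1 ∈ Lb3 \ {c}, ∃ g2 ∈ Lb3 \ {c}, g1 ≠ g2 := by
    rw [← Finset.one_lt_card]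
    have := Finset.card_le_card_sdiff_add_card (s := Lb3) (t := {c})
    have : ({c} : Finset A).card = 1 := Finset.card_singleton c
    omega
  rw [Finset.mem_sdiff, Finset.mem_singleton] at hg1 hg2
  obtain ⟨hLw1, hg1D⟩ := key g1 hg1.1 hg1.2
  obtain ⟨hLw2, hg2D⟩ := key g2 hg2.1 hg2.2
  have hmem : g1 ∈ Lw := by rw [hLw1]; simp
  rw [hLw2] at hmem
  simp only [Finset.mem_insert] at hmem
  rcases hmem with rfl | rfl | hm
  · exact hg1.2 rfl
  · exact hgg rfl
  · exact hg1D hm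


theorem theta_2_4_4_square_equitably_5_choosable :
    EquitablyChoosable (graphPow (theta 3 ![2, 4, 4]) 2) 5 := by
  intro A L hA
  by_contra hcon
  push_neg at hcon
  refine main_choice (L vc3) (L vc1) (L vb3) (L vb1) (L va) (L vw) (L vu) (L vc2) (L vb2)
    (hA vc3) (hA vc1) (hA vb3) (hA vb1) (hA va) (hA vw) (hA vu) (hA vc2) (hA vb2) ?_
  intro c hc d hd g hg b hb a ha x hx y hy z hz t ht
  intro hdc hgc hbd hbg hac had hag hab hxc hxg hxa hyd hyb hya hyx hzc hzd hzx hzy htg htb htx hty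
  have hmem : ∀ v : V9, fcol c d g b a x y z t v ∈ L v := by
    intro v
    rcases vcases v with rfl|rfl|rfl|rfl|rfl|rfl|rfl|rfl|rfl
    exacts [hy, hx, ha, hb, ht, hg, hd, hz, hc]
  have hprop : ∀ p q : V9, (graphPow (theta 3 ![2, 4, 4]) 2).Adj p q →
      fcol c d g b a x y z t p ≠ fcol c d g b a x y z t q := by
    intro p q hpq
    rw [pow_adj_char] at hpq
    rcases vcases p with rfl|rfl|rfl|rfl|rfl|rfl|rfl|rfl|rfl <;>
      rcases vcases q with rfl|rfl|rfl|rfl|rfl|rfl|rfl|rfl|rfl <;>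
      simp only [fcol_vu, fcol_vw, fcol_va, fcol_vb1, fcol_vb2, fcol_vb3, fcol_vc1,
        fcol_vc2, fcol_vc3] <;>
      first
        | exact Bool.noConfusion hpq
        | assumption
        | (apply Ne.symm; assumption)
  have hex : ∃ e : A, 2 < (Finset.univ.filter fun v => fcol c d g b a x y z t v = e).card := by
    by_contra hno
    push_neg at hno
    exact hcon (fcol c d g b a x y z t) ⟨hmem, hprop, hno⟩
  obtain ⟨e, he⟩ := hex
  rw [Finset.two_lt_card_iff] at he
  obtain ⟨p, q, r, hp, hq, hr, hpq, hpr, hqr⟩ := he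
  rw [Finset.mem_filter] at hp hq hr
  have nadj : ∀ p' q' : V9, p' ≠ q' → fcol c d g b a x y z t p' = fcol c d g b a x y z t q' →
      adj2B p' q' = false := by
    intro p' q' hne hfe
    cases h : adj2B p' q'
    · rfl
    · exact absurd hfe (hprop p' q' ((pow_adj_char p' q').mpr h))
  have h1 := nadj p q hpq (by rw [hp.2, hq.2])
  have h2 := nadj p r hpr (by rw [hp.2, hr.2])
  have h3 := nadj q r hqr (by rw [hq.2, hr.2])
  obtain ⟨hP, hQ, hR⟩ := triple_mem p q r hpq hpr hqr h1 h2 h3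
  have hkey : fcol c d g b a x y z t va = e ∧ fcol c d g b a x y z t vb2 = e ∧
      fcol c d g b a x y z t vc2 = e := by
    rcases hP with rfl|rfl|rfl <;> rcases hQ with rfl|rfl|rfl <;> rcases hR with rfl|rfl|rfl <;>
      first
        | exact absurd rfl hpq
        | exact absurd rfl hpr
        | exact absurd rfl hqr
        | exact ⟨by first | exact hp.2 | exact hq.2 | exact hr.2,
            by first | exact hp.2 | exact hq.2 | exact hr.2,
            by first | exact hp.2 | exact hq.2 | exact hr.2⟩
  have hae : a = e := by rw [← hkey.1]; exact (fcol_va c d g b a x y z t).symm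
  have hte : t = e := by rw [← hkey.2.1]; exact (fcol_vb2 c d g b a x y z t).symm
  have hze : z = e := by rw [← hkey.2.2]; exact (fcol_vc2 c d g b a x y z t).symm
  exact ⟨hze.trans hae.symm, hte.trans hae.symm⟩
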